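/- arXiv:2105.07258 — 5 statements merged into one kernel-verified Lean document; each statement's English description precedes it below -/
import Mathlib

section
/- For all natural numbers m ≠ n, the Legendre polynomials satisfy ∫_{-1}^{1} L_m(x) L_n(x) dx = 0. -/
open Polynomial

private lemma dvd_iterate_deriv (m k : ℕ) :
    ((X : ℝ[X]) ^ 2 - 1) ^ (m - k) ∣ Polynomial.derivative^[k] (((X : ℝ[X]) ^ 2 - 1) ^ m) := by
  induction k with
  | zero => simp
  | succ k ih =>
    obtain ⟨r, hr⟩ := ih
    rw [Function.iterate_succ_apply', hr]
    rcases le_or_gt m k with h | h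
    · have h1 : m - k = 0 := Nat.sub_eq_zero_of_le h
      have h2 : m - (k + 1) = 0 := Nat.sub_eq_zero_of_le (le_trans h (Nat.le_succ k))
      simp [h1, h2]
    · have h1 : m - k = (m - (k + 1)) + 1 := by omega
      rw [h1, derivative_mul, derivative_pow]
      apply dvd_add
      · apply Dvd.dvd.mul_right
        apply Dvd.dvd.mul_right
        apply Dvd.dvd.mul_left
        exact pow_dvd_pow _ (by omega)
      · exact Dvd.dvd.mul_right (pow_dvd_pow _ (by omega)) _

private lemma eval_iterate_deriv_eq_zero (m k : ℕ) (hk : k < m) (x : ℝ) (hx : x ^ 2 = 1) :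
    (Polynomial.derivative^[k] (((X : ℝ[X]) ^ 2 - 1) ^ m)).eval x = 0 := by
  obtain ⟨r, hr⟩ := dvd_iterate_deriv m k
  rw [hr]
  have h1 : m - k = (m - k - 1) + 1 := by omega
  have h2 : ((X : ℝ[X]) ^ 2 - 1).eval x = 0 := by simp [hx]
  rw [Polynomial.eval_mul, h1, pow_succ, Polynomial.eval_mul, h2, mul_zero, zero_mul]

private lemma poly_intble (p : ℝ[X]) (a b : ℝ) :
    IntervalIntegrable (fun x => p.eval x) MeasureTheory.volume a b :=
  (Polynomial.continuous p).intervalIntegrable a b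

private lemma step (p q : ℝ[X])
    (hp : (p.eval 1) = 0) (hp' : (p.eval (-1)) = 0) :
    ∫ x in (-1:ℝ)..1, (Polynomial.derivative p).eval x * q.eval x =
      - ∫ x in (-1:ℝ)..1, p.eval x * (Polynomial.derivative q).eval x := by
  have := intervalIntegral.integral_mul_deriv_eq_deriv_mul
    (a := (-1:ℝ)) (b := (1:ℝ))
    (u := fun x => q.eval x) (v := fun x => p.eval x)
    (u' := fun x => (Polynomial.derivative q).eval x)
    (v' := fun x => (Polynomial.derivative p).eval x)
    (fun x _ => q.hasDerivAt x) (fun x _ => p.hasDerivAt x)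
    (poly_intble _ _ _) (poly_intble _ _ _)
  simp only [hp, hp', mul_zero, sub_zero, zero_sub] at this
  have h2 : ∀ x, (Polynomial.derivative p).eval x * q.eval x
      = q.eval x * (Polynomial.derivative p).eval x := fun x => mul_comm _ _
  simp only [h2]
  rw [this]
  congr 1
  exact intervalIntegral.integral_congr fun x _ => mul_comm _ _

private lemma key (m n : ℕ) (h : n < m) : ∀ j, j ≤ n + 1 →
    ∫ x in (-1:ℝ)..1,
        (Polynomial.derivative^[m] (((X : ℝ[X]) ^ 2 - 1) ^ m)).eval x *
        (Polynomial.derivative^[n] (((X : ℝ[X]) ^ 2 - 1) ^ n)).eval x =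
      (-1 : ℝ) ^ j * ∫ x in (-1:ℝ)..1,
        (Polynomial.derivative^[m - j] (((X : ℝ[X]) ^ 2 - 1) ^ m)).eval x *
        (Polynomial.derivative^[n + j] (((X : ℝ[X]) ^ 2 - 1) ^ n)).eval x := by
  intro j hj
  induction j with
  | zero => simp
  | succ j ih =>
    rw [ih (by omega)]
    have hm : m - j = (m - (j + 1)) + 1 := by omega
    rw [hm, Function.iterate_succ_apply']
    rw [step _ (Polynomial.derivative^[n + j] (((X : ℝ[X]) ^ 2 - 1) ^ n))
      (eval_iterate_deriv_eq_zero m _ (by omega) 1 (by norm_num))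
      (eval_iterate_deriv_eq_zero m _ (by omega) (-1) (by norm_num))]
    have h2 : Polynomial.derivative (Polynomial.derivative^[n + j] (((X : ℝ[X]) ^ 2 - 1) ^ n))
        = Polynomial.derivative^[n + (j + 1)] (((X : ℝ[X]) ^ 2 - 1) ^ n) :=
      (Function.iterate_succ_apply' _ _ _).symm
    rw [h2]
    ring

private lemma core (m n : ℕ) (h : n < m) :
    ∫ x in (-1:ℝ)..1,
        (Polynomial.derivative^[m] (((X : ℝ[X]) ^ 2 - 1) ^ m)).eval x *
        (Polynomial.derivative^[n] (((X : ℝ[X]) ^ 2 - 1) ^ n)).eval x = 0 := by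
  rw [key m n h (n + 1) le_rfl]
  have hz : Polynomial.derivative^[n + (n + 1)] (((X : ℝ[X]) ^ 2 - 1) ^ n) = 0 := by
    apply Polynomial.iterate_derivative_eq_zero
    calc (((X : ℝ[X]) ^ 2 - 1) ^ n).natDegree ≤ n * (((X : ℝ[X]) ^ 2 - 1)).natDegree :=
          Polynomial.natDegree_pow_le
      _ ≤ n * 2 := by
          gcongr
          exact le_trans (Polynomial.natDegree_sub_le _ _) (by simp)
      _ < n + (n + 1) := by omega
  rw [hz]
  simp

/-- The `m`-th Legendre polynomial, via Rodrigues' formula. -/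
noncomputable def legendre (m : ℕ) : Polynomial ℝ :=
  ((1 : ℝ) / (2 ^ m * m.factorial)) • (Polynomial.derivative^[m] ((X ^ 2 - 1) ^ m))

theorem legendre_orthogonal (m n : ℕ) (hmn : m ≠ n) :
    ∫ x in (-1:ℝ)..1, (legendre m).eval x * (legendre n).eval x = 0 := by
  have hswap : ∀ a b : ℕ, b < a →
      ∫ x in (-1:ℝ)..1, (legendre a).eval x * (legendre b).eval x = 0 := by
    intro a b hba
    simp only [legendre, Polynomial.eval_smul, smul_eq_mul]
    have : ∀ x : ℝ, (1 / (2 ^ a * a.factorial) *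
        (Polynomial.derivative^[a] (((X : ℝ[X]) ^ 2 - 1) ^ a)).eval x) *
        (1 / (2 ^ b * b.factorial) *
        (Polynomial.derivative^[b] (((X : ℝ[X]) ^ 2 - 1) ^ b)).eval x) =
        (1 / (2 ^ a * a.factorial) * (1 / (2 ^ b * b.factorial))) *
        ((Polynomial.derivative^[a] (((X : ℝ[X]) ^ 2 - 1) ^ a)).eval x *
        (Polynomial.derivative^[b] (((X : ℝ[X]) ^ 2 - 1) ^ b)).eval x) := by
      intro x; ring
    simp only [this]
    rw [intervalIntegral.integral_const_mul, core a b hba, mul_zero]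
  rcases hmn.lt_or_gt with h | h
  · have := hswap n m h
    rw [← this]
    exact intervalIntegral.integral_congr fun x _ => mul_comm _ _
  · exact hswap m n h
end

section
/- For all natural numbers n ≥ m, ∫_{-1}^{1} x^{2n} · d^{2m}/dx^{2m}[(x²-1)^{2m}] dx = ((2n)!/(2(n-m))!) · ∫_{-1}^{1} x^{2(n-m)} (x²-1)^{2m} dx, and this integral is 0 when n < m. -/
open Polynomial

/-- One integration by parts step. -/
lemma step_ibp (p : Polynomial ℝ) (k : ℕ) (h1 : p.eval 1 = 0) (h2 : p.eval (-1) = 0) :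
    ∫ x in (-1:ℝ)..1, x ^ (k + 1) * (derivative p).eval x =
      -((k : ℝ) + 1) * ∫ x in (-1:ℝ)..1, x ^ k * p.eval x := by
  have hmain :
      ∫ x in (-1:ℝ)..1, x ^ (k + 1) * (derivative p).eval x =
        (1:ℝ) ^ (k + 1) * p.eval 1 - (-1:ℝ) ^ (k + 1) * p.eval (-1) -
          ∫ x in (-1:ℝ)..1, ((k : ℝ) + 1) * x ^ k * p.eval x := by
    apply intervalIntegral.integral_mul_deriv_eq_deriv_mul
      (u := fun x : ℝ => x ^ (k + 1)) (u' := fun x : ℝ => ((k : ℝ) + 1) * x ^ k)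
      (v := fun x : ℝ => p.eval x) (v' := fun x : ℝ => (derivative p).eval x)
    · intro x _
      simpa using (hasDerivAt_pow (k + 1) x)
    · intro x _
      exact p.hasDerivAt x
    · exact (Continuous.intervalIntegrable (by continuity) _ _)
    · exact ((derivative p).continuous_aeval.intervalIntegrable _ _)
  rw [hmain, h1, h2]
  rw [show (∫ x in (-1:ℝ)..1, ((k : ℝ) + 1) * x ^ k * p.eval x)
      = ((k : ℝ) + 1) * ∫ x in (-1:ℝ)..1, x ^ k * p.eval x by
    rw [← intervalIntegral.integral_const_mul]; congr 1; ext x; ring]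
  ring

lemma main_ibp (p : Polynomial ℝ) :
    ∀ j k : ℕ, (∀ i, i < j → (derivative^[i] p).eval 1 = 0 ∧ (derivative^[i] p).eval (-1) = 0) →
      (j ≤ k →
        ∫ x in (-1:ℝ)..1, x ^ k * (derivative^[j] p).eval x =
          (-1:ℝ) ^ j * ((k.factorial : ℝ) / ((k - j).factorial : ℝ)) *
            ∫ x in (-1:ℝ)..1, x ^ (k - j) * p.eval x) ∧
      (k < j → ∫ x in (-1:ℝ)..1, x ^ k * (derivative^[j] p).eval x = 0) := by
  intro j
  induction j with
  | zero =>
    intro k _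
    constructor
    · intro _
      simp [div_self (Nat.cast_ne_zero.mpr k.factorial_ne_zero : (k.factorial:ℝ) ≠ 0)]
    · intro h; omega
  | succ j ih =>
    intro k hvan
    have hsucc : derivative^[j + 1] p = derivative (derivative^[j] p) :=
      Function.iterate_succ_apply' _ _ _
    match k with
    | 0 =>
      constructor
      · intro h; omega
      · intro _
        have h1 := (hvan j (by omega)).1
        have h2 := (hvan j (by omega)).2
        rw [hsucc]
        simp only [pow_zero, one_mul]
        rw [intervalIntegral.integral_eq_sub_of_hasDerivAt
          (f := fun x : ℝ => (derivative^[j] p).eval x)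
          (fun x _ => (derivative^[j] p).hasDerivAt x)
          ((derivative (derivative^[j] p)).continuous_aeval.intervalIntegrable _ _)]
        rw [h1, h2]; ring
    | k + 1 =>
      have hstep : ∫ x in (-1:ℝ)..1, x ^ (k + 1) * (derivative^[j + 1] p).eval x =
          -((k : ℝ) + 1) * ∫ x in (-1:ℝ)..1, x ^ k * (derivative^[j] p).eval x := by
        rw [hsucc]
        exact step_ibp _ k (hvan j (by omega)).1 (hvan j (by omega)).2
      have ihk := ih k (fun i hi => hvan i (by omega))
      constructor
      · intro hjk
        have hjk' : j ≤ k := by omega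
        rw [hstep, ihk.1 hjk']
        have hfac : ((k + 1).factorial : ℝ) = ((k : ℝ) + 1) * (k.factorial : ℝ) := by
          rw [Nat.factorial_succ]; push_cast; ring
        have hkj : k + 1 - (j + 1) = k - j := by omega
        rw [hkj, pow_succ, hfac]
        ring
      · intro hkj
        rw [hstep, ihk.2 (by omega)]
        ring

theorem integral_pow_mul_iterated_deriv (m n : ℕ) :
    (m ≤ n →
      ∫ x in (-1:ℝ)..1,
          x ^ (2 * n) * (Polynomial.derivative^[2 * m] (((X : Polynomial ℝ) ^ 2 - 1) ^ (2 * m))).eval x =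
        (((2 * n).factorial : ℝ) / ((2 * (n - m)).factorial : ℝ)) *
          ∫ x in (-1:ℝ)..1, x ^ (2 * (n - m)) * (x ^ 2 - 1) ^ (2 * m)) ∧
    (n < m →
      ∫ x in (-1:ℝ)..1,
          x ^ (2 * n) * (Polynomial.derivative^[2 * m] (((X : Polynomial ℝ) ^ 2 - 1) ^ (2 * m))).eval x = 0) := by
  set p : Polynomial ℝ := ((X : Polynomial ℝ) ^ 2 - 1) ^ (2 * m) with hp
  have hvan : ∀ i, i < 2 * m → (derivative^[i] p).eval 1 = 0 ∧ (derivative^[i] p).eval (-1) = 0 := by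
    intro i hi
    obtain ⟨q, hq⟩ := Polynomial.pow_sub_dvd_iterate_derivative_pow
      ((X : Polynomial ℝ) ^ 2 - 1) (2 * m) i
    have hz : ∀ x : ℝ, x ^ 2 - 1 = 0 → (derivative^[i] p).eval x = 0 := by
      intro x hx
      rw [hp, hq, eval_mul, eval_pow]
      simp [hx, zero_pow (by omega : 2 * m - i ≠ 0)]
    exact ⟨hz 1 (by norm_num), hz (-1) (by norm_num)⟩
  have hmain := main_ibp p (2 * m) (2 * n) hvan
  have hev : ∀ x : ℝ, p.eval x = (x ^ 2 - 1) ^ (2 * m) := by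
    intro x; simp [hp]
  constructor
  · intro hmn
    have h1 := hmain.1 (by omega)
    rw [h1]
    have : 2 * n - 2 * m = 2 * (n - m) := by omega
    rw [this]
    simp only [hev]
    rw [Even.neg_one_pow ⟨m, by ring⟩]
    ring
  · intro hnm
    exact hmain.2 (by omega)
end

section
/- For every l > 0 and all m, n ∈ ℕ with n ≥ m, (1/(2l)) ∫_{-l}^{l} x^{2n} e_{2m,l}(x) dx = √(4m+1) · 2^{2m+1} · l^{2n} · (2n)! · (m+n+1)! / ( (n-m)! · (2(m+n+1))! ), and this quantity is 0 when n < m. -/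
open Polynomial

/-- The rescaled normalized Legendre function `e_{m,l}(x) = √(2m+1) L_m(x/l)`. -/
noncomputable def eFun (m : ℕ) (l : ℝ) (x : ℝ) : ℝ :=
  Real.sqrt (2 * m + 1) * (legendre m).eval (x / l)

noncomputable def Ipol (p : Polynomial ℝ) : ℝ := ∫ x in (-1:ℝ)..1, p.eval x

lemma Ipol_def (p : Polynomial ℝ) : Ipol p = ∫ x in (-1:ℝ)..1, p.eval x := rfl

lemma intble (p : Polynomial ℝ) (a b : ℝ) :
    IntervalIntegrable (fun x => p.eval x) MeasureTheory.volume a b :=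
  p.continuous.intervalIntegrable a b

lemma Ipol_zero : Ipol 0 = 0 := by simp [Ipol]

lemma Ipol_add (p q : Polynomial ℝ) : Ipol (p + q) = Ipol p + Ipol q := by
  simp only [Ipol, eval_add]
  exact intervalIntegral.integral_add (intble p _ _) (intble q _ _)

lemma Ipol_Cmul (c : ℝ) (p : Polynomial ℝ) : Ipol (C c * p) = c * Ipol p := by
  simp only [Ipol, eval_mul, eval_C]
  exact intervalIntegral.integral_const_mul c _

lemma Ipol_deriv (p : Polynomial ℝ) : Ipol (derivative p) = p.eval 1 - p.eval (-1) := by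
  exact intervalIntegral.integral_deriv_eq_sub' _
    (funext fun x => (p.hasDerivAt x).deriv)
    (fun x _ => (p.hasDerivAt x).differentiableAt)
    ((derivative p).continuous.continuousOn)

lemma Ipol_parts (p q : Polynomial ℝ) :
    Ipol (p * derivative q) =
      p.eval 1 * q.eval 1 - p.eval (-1) * q.eval (-1) - Ipol (derivative p * q) := by
  have h := Ipol_deriv (p * q)
  rw [derivative_mul, Ipol_add] at h
  simp only [eval_mul] at h
  linarith

lemma Ipol_X_pow (k : ℕ) : Ipol (X ^ k : Polynomial ℝ) = (1 - (-1:ℝ) ^ (k+1)) / (k+1) := by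
  simp [Ipol, integral_pow]

lemma deriv_sq_sub_one : derivative (X^2-1 : Polynomial ℝ) = 2*X := by
  norm_num [derivative_X_pow]
  rfl

lemma dvd_iterate (N : ℕ) : ∀ j : ℕ, j ≤ N →
    ∃ r : Polynomial ℝ, derivative^[j] ((X^2-1)^N) = (X^2-1)^(N-j) * r := by
  intro j
  induction j with
  | zero => exact fun _ => ⟨1, by simp⟩
  | succ j ih =>
    intro h
    obtain ⟨r, hr⟩ := ih (by omega)
    have hk : N - j = (N - (j+1)) + 1 := by omega
    refine ⟨(((N - (j+1)) + 1 : ℕ) : Polynomial ℝ) * (2*X) * r + (X^2-1) * derivative r, ?_⟩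
    rw [Function.iterate_succ_apply', hr, hk, derivative_mul, derivative_pow, deriv_sq_sub_one]
    simp only [Nat.add_sub_cancel, C_eq_natCast]
    ring

lemma eval_iterate_zero (N j : ℕ) (h : j < N) (x : ℝ) (hx : x^2 = 1) :
    (derivative^[j] ((X^2-1:Polynomial ℝ)^N)).eval x = 0 := by
  obtain ⟨r, hr⟩ := dvd_iterate N j h.le
  have hk : N - j = (N - j - 1) + 1 := by omega
  rw [hr, hk, pow_succ]
  simp [hx]

lemma parts_iter (N : ℕ) (p : Polynomial ℝ) : ∀ r : ℕ, r ≤ N →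
    Ipol (p * derivative^[N] ((X^2-1)^N)) =
      (-1:ℝ)^r * Ipol (derivative^[r] p * derivative^[N-r] ((X^2-1)^N)) := by
  intro r
  induction r with
  | zero => simp
  | succ r ih =>
    intro h
    rw [ih (by omega)]
    have h1 : N - r = (N - (r+1)) + 1 := by omega
    rw [h1, Function.iterate_succ_apply' derivative (N - (r+1)), Ipol_parts]
    have e1 : (derivative^[N-(r+1)] ((X^2-1:Polynomial ℝ)^N)).eval 1 = 0 :=
      eval_iterate_zero N _ (by omega) 1 (by norm_num)
    have e2 : (derivative^[N-(r+1)] ((X^2-1:Polynomial ℝ)^N)).eval (-1) = 0 :=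
      eval_iterate_zero N _ (by omega) (-1) (by norm_num)
    rw [e1, e2, ← Function.iterate_succ_apply' derivative r p]
    ring

lemma fac_pos (k : ℕ) : (0:ℝ) < (k.factorial : ℝ) := by
  exact_mod_cast Nat.factorial_pos k

lemma moment (p : ℕ) : ∀ j : ℕ, Ipol (X^(2*j) * (X^2-1)^p) =
    (-1:ℝ)^p * 2^(2*p+1) * ((p.factorial : ℝ) * ((j+p).factorial : ℝ) * ((2*j).factorial : ℝ)) /
      ((j.factorial : ℝ) * ((2*j+2*p+1).factorial : ℝ)) := by
  induction p with
  | zero =>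
    intro j
    have h1 : (X^(2*j) * (X^2-1)^0 : Polynomial ℝ) = X^(2*j) := by simp
    rw [h1, Ipol_X_pow]
    have h2 : ((2*j+2*0+1).factorial : ℝ) = (2*j+1) * ((2*j).factorial : ℝ) := by
      rw [show 2*j+2*0+1 = (2*j)+1 by ring, Nat.factorial_succ]; push_cast; ring
    rw [h2]
    have h3 : (-1:ℝ)^(2*j+1) = -1 := by
      rw [pow_succ, pow_mul]; norm_num
    rw [h3]
    have := fac_pos (2*j)
    have := fac_pos j
    have h4 : (0:ℝ) < 2*(j:ℝ)+1 := by positivity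
    field_simp
    push_cast; ring
  | succ p ih =>
    intro j
    have hq : derivative (X ^ (2*j+1) * (X^2-1)^(p+1) : Polynomial ℝ) =
        C (((2*j+1 : ℕ) : ℝ)) * (X^(2*j) * (X^2-1)^(p+1)) +
          C (((2*p+2 : ℕ) : ℝ)) * (X^(2*(j+1)) * (X^2-1)^p) := by
      rw [derivative_mul, derivative_X_pow, derivative_pow, deriv_sq_sub_one]
      simp only [Nat.add_sub_cancel, C_eq_natCast]
      push_cast
      ring
    have h0 : Ipol (derivative (X ^ (2*j+1) * (X^2-1)^(p+1))) = 0 := by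
      rw [Ipol_deriv]
      simp [eval_mul, eval_pow]
    rw [hq, Ipol_add, Ipol_Cmul, Ipol_Cmul, ih (j+1)] at h0
    push_cast at h0
    have hI : Ipol (X^(2*j) * (X^2-1)^(p+1)) =
        -(2*(p:ℝ)+2)/(2*(j:ℝ)+1) *
        ((-1:ℝ)^p * 2^(2*p+1) * ((p.factorial : ℝ) * (((j+1)+p).factorial : ℝ) * ((2*(j+1)).factorial : ℝ)) /
          ((((j+1)).factorial : ℝ) * ((2*(j+1)+2*p+1).factorial : ℝ))) := by
      have h4 : (0:ℝ) < 2*(j:ℝ)+1 := by positivity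
      field_simp at h0 ⊢
      linarith
    rw [hI]
    have f1 : ((2*(j+1)).factorial : ℝ) = (2*(j:ℝ)+2)*(2*(j:ℝ)+1)*((2*j).factorial : ℝ) := by
      rw [show 2*(j+1) = (2*j+1)+1 by ring, Nat.factorial_succ, Nat.factorial_succ]; push_cast; ring
    have f2 : (((j+1)).factorial : ℝ) = ((j:ℝ)+1)*(j.factorial : ℝ) := by
      rw [Nat.factorial_succ]; push_cast; ring
    have f3 : (((p+1)).factorial : ℝ) = ((p:ℝ)+1)*(p.factorial : ℝ) := by
      rw [Nat.factorial_succ]; push_cast; ring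
    have f4 : (((j+1)+p).factorial : ℝ) = ((j+(p+1)).factorial : ℝ) := by
      rw [show (j+1)+p = j+(p+1) by ring]
    have f5 : ((2*(j+1)+2*p+1).factorial : ℝ) = ((2*j+2*(p+1)+1).factorial : ℝ) := by
      rw [show 2*(j+1)+2*p+1 = 2*j+2*(p+1)+1 by ring]
    rw [f1, f2, f3, f4, f5]
    have := fac_pos (2*j)
    have := fac_pos j
    have := fac_pos p
    have := fac_pos (j+(p+1))
    have := fac_pos (2*j+2*(p+1)+1)
    have h4 : (0:ℝ) < 2*(j:ℝ)+1 := by positivity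
    have h5 : (0:ℝ) < (j:ℝ)+1 := by positivity
    field_simp
    ring

lemma keyB (m n : ℕ) (h : n < m) :
    Ipol (X^(2*n) * derivative^[2*m] ((X^2-1)^(2*m))) = 0 := by
  rw [parts_iter (2*m) _ (2*n+1) (by omega)]
  have hz : derivative^[2*n+1] (X^(2*n) : Polynomial ℝ) = 0 := by
    rw [iterate_derivative_X_pow_eq_smul]
    rw [Nat.descFactorial_eq_zero_iff_lt.mpr (by omega)]
    simp
  rw [hz]
  simp [Ipol_zero]

lemma keyA (m n : ℕ) (h : m ≤ n) :
    Ipol (X^(2*n) * derivative^[2*m] ((X^2-1)^(2*m))) =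
      2^(4*m+1) * ((2*m).factorial : ℝ) * ((2*n).factorial : ℝ) * ((n+m).factorial : ℝ) /
        (((n-m).factorial : ℝ) * ((2*n+2*m+1).factorial : ℝ)) := by
  rw [parts_iter (2*m) _ (2*m) le_rfl]
  have hsimp : (2*m : ℕ) - 2*m = 0 := by omega
  rw [hsimp]
  have hd : derivative^[2*m] (X^(2*n) : Polynomial ℝ) =
      C (((2*n).descFactorial (2*m) : ℝ)) * X^(2*(n-m)) := by
    rw [iterate_derivative_X_pow_eq_smul, show 2*n - 2*m = 2*(n-m) by omega,
      smul_eq_C_mul]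
  rw [hd, mul_assoc, Ipol_Cmul, Function.iterate_zero_apply, moment (2*m) (n-m)]
  have e1 : (n-m)+2*m = n+m := by omega
  have e2 : 2*(n-m)+2*(2*m)+1 = 2*n+2*m+1 := by omega
  rw [e1, e2]
  have hnat : (2*(n-m)).factorial * (2*n).descFactorial (2*m) = (2*n).factorial := by
    rw [show 2*(n-m) = 2*n - 2*m by omega]
    exact Nat.factorial_mul_descFactorial (by omega)
  have hdesc : ((2*n).descFactorial (2*m) : ℝ) * ((2*(n-m)).factorial : ℝ) = ((2*n).factorial : ℝ) := by
    rw [mul_comm, ← Nat.cast_mul, hnat]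
  have h1 : (-1:ℝ)^(2*m) = 1 := by rw [pow_mul]; norm_num
  rw [h1]
  have := fac_pos (n-m)
  have := fac_pos (2*(n-m))
  have := fac_pos (2*n+2*m+1)
  have h2 : (2:ℝ)^(2*(2*m)+1) = 2^(4*m+1) := by rw [show 2*(2*m)+1 = 4*m+1 by ring]
  field_simp
  rw [h2]
  linear_combination (2:ℝ)^(4*m+1) * hdesc

lemma Ipol_smul (c : ℝ) (p : Polynomial ℝ) : Ipol (c • p) = c * Ipol p := by
  rw [smul_eq_C_mul, Ipol_Cmul]

theorem inner_pow_even_eFun_even (l : ℝ) (hl : 0 < l) (m n : ℕ) :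
    (m ≤ n →
      (1 / (2 * l)) * ∫ x in (-l)..l, x ^ (2 * n) * eFun (2 * m) l x =
        Real.sqrt (4 * m + 1) * 2 ^ (2 * m + 1) * l ^ (2 * n)
          * (((2 * n).factorial : ℝ) * ((m + n + 1).factorial : ℝ))
          / (((n - m).factorial : ℝ) * ((2 * (m + n + 1)).factorial : ℝ))) ∧
    (n < m → (1 / (2 * l)) * ∫ x in (-l)..l, x ^ (2 * n) * eFun (2 * m) l x = 0) := by
  have hl' : l ≠ 0 := hl.ne'
  set s : ℝ := Real.sqrt (2 * ((2*m : ℕ) : ℝ) + 1) with hs_def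
  have hs : s = Real.sqrt (4 * (m:ℝ) + 1) := by
    rw [hs_def]; congr 1; push_cast; ring
  have hmain : (∫ x in (-l)..l, x ^ (2*n) * eFun (2*m) l x)
      = l * ((l^(2*n) * s) * Ipol (X^(2*n) * legendre (2*m))) := by
    have h1 : (∫ x in (-l)..l, x ^ (2*n) * eFun (2*m) l x)
        = ∫ x in (-l)..l,
            (fun u => (l^(2*n) * s) * ((X^(2*n) * legendre (2*m)).eval u)) (x / l) := by
      apply intervalIntegral.integral_congr
      intro x _
      simp only [hs_def, eFun, eval_mul, eval_pow, eval_X, div_pow]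
      field_simp
    rw [h1]
    beta_reduce
    have h2 := intervalIntegral.integral_comp_div
      (f := fun u => (X^(2*n) * legendre (2*m)).eval u) (c := l) (a := -l) (b := l) hl'
    beta_reduce at h2
    rw [intervalIntegral.integral_const_mul, h2,
      neg_div, div_self hl', smul_eq_mul, ← Ipol_def]
    ring
  have hleg : Ipol (X^(2*n) * legendre (2*m))
      = (1 / (2 ^ (2*m) * ((2*m).factorial : ℝ))) *
          Ipol (X^(2*n) * derivative^[2*m] ((X^2-1)^(2*m))) := by
    rw [legendre, mul_smul_comm, Ipol_smul]
  constructor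
  · intro h
    rw [hmain, hleg, keyA m n h, hs]
    have g1 : ((2*(m+n+1)).factorial : ℝ) = (2*(m:ℝ)+2*n+2) * ((2*n+2*m+1).factorial : ℝ) := by
      rw [show 2*(m+n+1) = (2*n+2*m+1)+1 by ring, Nat.factorial_succ]; push_cast; ring
    have g2 : ((m+n+1).factorial : ℝ) = ((m:ℝ)+n+1) * ((n+m).factorial : ℝ) := by
      rw [show m+n+1 = (n+m)+1 by ring, Nat.factorial_succ]; push_cast; ring
    rw [g1, g2]
    have := fac_pos (n-m)
    have := fac_pos (2*n+2*m+1)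
    have := fac_pos (2*m)
    have := fac_pos (n+m)
    have h2 : (0:ℝ) < 2*(m:ℝ)+2*n+2 := by positivity
    have h3 : (0:ℝ) < (m:ℝ)+n+1 := by positivity
    field_simp
    ring
  · intro h
    rw [hmain, hleg, keyB m n h]
    ring
end

section
/- For every l > 0 and all m, n ∈ ℕ with n ≥ m, (1/(2l)) ∫_{-l}^{l} x^{2n+1} e_{2m+1,l}(x) dx = √(4m+3) · 2^{2m+1} · l^{2n+1} · (2n+1)! · (m+n+1)! / ( (n-m)! · (2(m+n+1)+1)! ), and this quantity is 0 when n < m. -/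
open Polynomial

open intervalIntegral MeasureTheory
open Polynomial intervalIntegral MeasureTheory

lemma integral_eval_derivative (p : ℝ[X]) (a b : ℝ) :
    ∫ x in a..b, (derivative p).eval x = p.eval b - p.eval a := by
  apply intervalIntegral.integral_eq_sub_of_hasDerivAt (fun x _ => p.hasDerivAt x)
  exact (p.derivative.continuous_aeval).intervalIntegrable a b

lemma poly_intervalIntegrable (p : ℝ[X]) (a b : ℝ) :
    IntervalIntegrable (fun x => p.eval x) volume a b :=
  (p.continuous_aeval).intervalIntegrable a b

lemma integral_parts (p q : ℝ[X]) (a b : ℝ) :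
    ∫ x in a..b, p.eval x * (derivative q).eval x =
      p.eval b * q.eval b - p.eval a * q.eval a
        - ∫ x in a..b, (derivative p).eval x * q.eval x := by
  have h := integral_eval_derivative (p * q) a b
  rw [derivative_mul] at h
  have h2 : ∫ x in a..b, ((derivative p * q + p * derivative q).eval x) =
      (∫ x in a..b, (derivative p).eval x * q.eval x)
        + ∫ x in a..b, p.eval x * (derivative q).eval x := by
    simp only [eval_add, eval_mul]
    rw [intervalIntegral.integral_add]
    · exact ((p.derivative.continuous_aeval.mul q.continuous_aeval)).intervalIntegrable a b
    · exact ((p.continuous_aeval.mul q.derivative.continuous_aeval)).intervalIntegrable a b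
  rw [h2] at h
  simp only [eval_mul] at h
  linarith
open Polynomial intervalIntegral MeasureTheory

lemma eval_iter_deriv_pow_zero (N k : ℕ) (hk : k < N) (t : ℝ) (ht : t = 1 ∨ t = -1) :
    (derivative^[k] (((X:ℝ[X]) ^ 2 - 1) ^ N)).eval t = 0 := by
  have hfac : ((X:ℝ[X])^2 - 1) = (X - C 1) * (X - C (-1)) := by
    simp [C_1]; ring
  have hdvd : (X - C t) ^ N ∣ ((X:ℝ[X])^2 - 1) ^ N := by
    rcases ht with rfl | rfl
    · exact pow_dvd_pow_of_dvd ⟨X - C (-1), hfac⟩ N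
    · exact pow_dvd_pow_of_dvd ⟨X - C 1, by rw [hfac]; ring⟩ N
  have hne : (((X:ℝ[X])^2 - 1) ^ N) ≠ 0 := by
    apply pow_ne_zero
    intro h
    have := congrArg (fun p => Polynomial.eval 0 p) h
    simp at this
  have hmult : N ≤ rootMultiplicity t (((X:ℝ[X])^2 - 1) ^ N) :=
    (le_rootMultiplicity_iff hne).2 hdvd
  exact isRoot_iterate_derivative_of_lt_rootMultiplicity (lt_of_lt_of_le hk hmult)

lemma iter_parts (p : ℝ[X]) (N : ℕ) : ∀ j ≤ N,
    ∫ x in (-1:ℝ)..1, p.eval x * (derivative^[N] (((X:ℝ[X])^2 - 1) ^ N)).eval x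
      = (-1:ℝ)^j * ∫ x in (-1:ℝ)..1,
          (derivative^[j] p).eval x * (derivative^[N-j] (((X:ℝ[X])^2 - 1) ^ N)).eval x := by
  intro j hj
  induction j with
  | zero => simp
  | succ j ih =>
    rw [ih (Nat.le_of_succ_le hj)]
    have hNj : N - j = (N - (j+1)) + 1 := by omega
    have hiter : derivative^[N-j] (((X:ℝ[X])^2 - 1) ^ N)
        = derivative (derivative^[N-(j+1)] (((X:ℝ[X])^2 - 1) ^ N)) := by
      rw [hNj, Function.iterate_succ_apply']
    rw [hiter, integral_parts]
    have h1 : (derivative^[N-(j+1)] (((X:ℝ[X])^2 - 1) ^ N)).eval 1 = 0 :=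
      eval_iter_deriv_pow_zero N _ (by omega) 1 (Or.inl rfl)
    have h2 : (derivative^[N-(j+1)] (((X:ℝ[X])^2 - 1) ^ N)).eval (-1) = 0 :=
      eval_iter_deriv_pow_zero N _ (by omega) (-1) (Or.inr rfl)
    rw [h1, h2, Function.iterate_succ_apply']
    ring

lemma Jval : ∀ (p : ℕ), ∀ (s : ℕ),
    ∫ x in (-1:ℝ)..1, x^(2*s) * (x^2-1)^p
      = (-1:ℝ)^p * 2^(2*p+1) * (p.factorial : ℝ) * ((s+p).factorial : ℝ)
          * ((2*s).factorial : ℝ) / (((2*s+2*p+1).factorial : ℝ) * (s.factorial : ℝ)) := by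
  intro p
  induction p with
  | zero =>
    intro s
    simp only [pow_zero, mul_one]
    rw [integral_pow]
    have e1 : 2*s+2*0+1 = (2*s)+1 := by ring
    rw [e1, Nat.factorial_succ]
    have h1 : ((2*s).factorial : ℝ) ≠ 0 := Nat.cast_ne_zero.2 (Nat.factorial_ne_zero _)
    have h2 : ((s).factorial : ℝ) ≠ 0 := Nat.cast_ne_zero.2 (Nat.factorial_ne_zero _)
    have h3 : ((2*s:ℕ):ℝ) + 1 ≠ 0 := by positivity
    have hodd : (-1:ℝ)^(2*s+1) = -1 := by
      rw [pow_succ, pow_mul]; norm_num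
    rw [hodd]
    push_cast
    field_simp
    ring
  | succ p ih =>
    intro s
    -- FTC step
    have key : ∀ x : ℝ, HasDerivAt (fun x : ℝ => x^(2*s+1) * (x^2-1)^(p+1))
        (((2*s+1:ℕ) * x^(2*s)) * (x^2-1)^(p+1)
          + x^(2*s+1) * ((p+1:ℕ) * (x^2-1)^p * (2*x))) x := by
      intro x
      have h1 : HasDerivAt (fun x : ℝ => x^(2*s+1)) ((2*s+1:ℕ) * x^(2*s)) x := by
        simpa using hasDerivAt_pow (2*s+1) x
      have h2 : HasDerivAt (fun x : ℝ => (x^2-1)^(p+1)) ((p+1:ℕ) * (x^2-1)^p * (2*x)) x := by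
        have hx : HasDerivAt (fun x : ℝ => x^2-1) (2*x) x := by
          simpa using (hasDerivAt_pow 2 x).sub_const 1
        simpa using hx.fun_pow (p+1)
      simpa using h1.fun_mul h2
    have hInt : ∫ x in (-1:ℝ)..1, (((2*s+1:ℕ) * x^(2*s)) * (x^2-1)^(p+1)
          + x^(2*s+1) * ((p+1:ℕ) * (x^2-1)^p * (2*x))) = 0 := by
      rw [intervalIntegral.integral_eq_sub_of_hasDerivAt (fun x _ => key x)]
      · norm_num
      · apply Continuous.intervalIntegrable; continuity
    have hsplit : ∫ x in (-1:ℝ)..1, (((2*s+1:ℕ) * x^(2*s)) * (x^2-1)^(p+1)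
          + x^(2*s+1) * ((p+1:ℕ) * (x^2-1)^p * (2*x)))
        = ((2*s+1:ℕ):ℝ) * (∫ x in (-1:ℝ)..1, x^(2*s) * (x^2-1)^(p+1))
          + (2*((p+1:ℕ):ℝ)) * (∫ x in (-1:ℝ)..1, x^(2*(s+1)) * (x^2-1)^p) := by
      rw [intervalIntegral.integral_add]
      · congr 1
        · rw [← intervalIntegral.integral_const_mul]
          congr 1; ext x; ring
        · rw [← intervalIntegral.integral_const_mul]
          congr 1; ext x; ring
      · apply Continuous.intervalIntegrable; continuity
      · apply Continuous.intervalIntegrable; continuity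
    rw [hsplit] at hInt
    have hIH := ih (s+1)
    have h3 : ((2*s:ℕ):ℝ) + 1 ≠ 0 := by positivity
    have heq : (∫ x in (-1:ℝ)..1, x^(2*s) * (x^2-1)^(p+1))
        = -(2*((p+1:ℕ):ℝ)) / ((2*s+1:ℕ):ℝ) * (∫ x in (-1:ℝ)..1, x^(2*(s+1)) * (x^2-1)^p) := by
      have hne : ((2*s+1:ℕ):ℝ) ≠ 0 := by push_cast; positivity
      push_cast at hInt ⊢
      field_simp
      linarith [hInt]
    rw [heq, hIH]
    -- factorial algebra
    have e1 : 2*(s+1)+2*p+1 = 2*s+2*(p+1)+1 := by ring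
    have e2 : s+1+p = s+(p+1) := by ring
    have e3 : 2*(s+1) = (2*s+1)+1 := by ring
    rw [e1, e2, e3, Nat.factorial_succ, Nat.factorial_succ]
    have e4 : (p+1).factorial = (p+1) * p.factorial := Nat.factorial_succ p
    have e5 : (s+1).factorial = (s+1) * s.factorial := Nat.factorial_succ s
    rw [e4, e5]
    have h1 : ((2*s).factorial : ℝ) ≠ 0 := Nat.cast_ne_zero.2 (Nat.factorial_ne_zero _)
    have h2 : ((s).factorial : ℝ) ≠ 0 := Nat.cast_ne_zero.2 (Nat.factorial_ne_zero _)
    have h6 : (((2*s+2*(p+1)+1).factorial : ℝ)) ≠ 0 := Nat.cast_ne_zero.2 (Nat.factorial_ne_zero _)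
    have h7 : ((p).factorial : ℝ) ≠ 0 := Nat.cast_ne_zero.2 (Nat.factorial_ne_zero _)
    have h8 : ((s:ℝ)+1) ≠ 0 := by positivity
    push_cast
    field_simp
    ring

lemma legendre_moment_le (m n : ℕ) (h : m ≤ n) :
    ∫ x in (-1:ℝ)..1, x^(2*n+1) * (legendre (2*m+1)).eval x
      = 2^(2*m+2) * ((2*n+1).factorial : ℝ) * ((m+n+1).factorial : ℝ)
          / (((n-m).factorial : ℝ) * ((2*(m+n+1)+1).factorial : ℝ)) := by
  obtain ⟨k, rfl⟩ : ∃ k, n = m + k := ⟨n - m, by omega⟩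
  set N := 2*m+1 with hN
  have hleg : ∀ x : ℝ, (legendre N).eval x
      = (1 / (2^N * (N.factorial : ℝ))) * (derivative^[N] (((X:ℝ[X])^2 - 1) ^ N)).eval x := by
    intro x; simp [legendre, hN]
  have step1 : ∫ x in (-1:ℝ)..1, x^(2*(m+k)+1) * (legendre N).eval x
      = (1 / (2^N * (N.factorial : ℝ))) *
        ∫ x in (-1:ℝ)..1, ((X:ℝ[X])^(2*(m+k)+1)).eval x
          * (derivative^[N] (((X:ℝ[X])^2 - 1) ^ N)).eval x := by
    rw [← intervalIntegral.integral_const_mul]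
    congr 1; ext x; rw [hleg]; simp; ring
  rw [step1, iter_parts _ N N le_rfl]
  have hD : derivative^[N] ((X:ℝ[X])^(2*(m+k)+1))
      = ((2*(m+k)+1).descFactorial N : ℝ[X]) * X^(2*k) := by
    rw [Polynomial.iterate_derivative_X_pow_eq_natCast_mul]
    congr 2
    omega
  rw [hD]
  have step2 : ∫ x in (-1:ℝ)..1,
        ((((2*(m+k)+1).descFactorial N : ℝ[X])) * X^(2*k)).eval x
          * (derivative^[N-N] (((X:ℝ[X])^2 - 1) ^ N)).eval x
      = (((2*(m+k)+1).descFactorial N : ℕ) : ℝ) * ∫ x in (-1:ℝ)..1, x^(2*k) * (x^2-1)^N := by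
    rw [← intervalIntegral.integral_const_mul]
    congr 1; ext x; simp [Nat.sub_self]; ring
  rw [step2, Jval]
  -- now pure algebra
  have hdesc : (((2*(m+k)+1).descFactorial N : ℕ) : ℝ) * ((2*k).factorial : ℝ)
      = ((2*(m+k)+1).factorial : ℝ) := by
    rw [← Nat.cast_mul, mul_comm]
    norm_cast
    have := Nat.factorial_mul_descFactorial (n := 2*(m+k)+1) (k := N) (by omega)
    have e : 2*(m+k)+1 - N = 2*k := by omega
    rw [e] at this
    exact this
  have e6 : m + k - m = k := by omega
  have e7 : k + N = m + k + 1 + m := by omega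
  have e8 : 2*k+2*N+1 = 2*(m+(m+k)+1)+1 := by omega
  rw [e6, e7, e8]
  have hodd : (-1:ℝ)^N = -1 := by rw [hN, pow_succ, pow_mul]; norm_num
  rw [hodd]
  have h1 : ((N.factorial : ℕ) : ℝ) ≠ 0 := Nat.cast_ne_zero.2 (Nat.factorial_ne_zero _)
  have h2 : ((k.factorial : ℕ) : ℝ) ≠ 0 := Nat.cast_ne_zero.2 (Nat.factorial_ne_zero _)
  have h4 : (((2*(m+(m+k)+1)+1).factorial : ℕ) : ℝ) ≠ 0 :=
    Nat.cast_ne_zero.2 (Nat.factorial_ne_zero _)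
  have h5 : (((m+k+1+m).factorial : ℕ) : ℝ) ≠ 0 := Nat.cast_ne_zero.2 (Nat.factorial_ne_zero _)
  have e9 : m + (m+k) + 1 = m + k + 1 + m := by omega
  rw [← hdesc]
  have hpow : (2:ℝ)^(2*N+1) = 2^N * 2^(2*m+2) := by
    rw [← pow_add]; congr 1; omega
  rw [hpow]
  field_simp
  ring

lemma legendre_moment_lt (m n : ℕ) (h : n < m) :
    ∫ x in (-1:ℝ)..1, x^(2*n+1) * (legendre (2*m+1)).eval x = 0 := by
  set N := 2*m+1 with hN
  have hleg : ∀ x : ℝ, (legendre N).eval x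
      = (1 / (2^N * (N.factorial : ℝ))) * (derivative^[N] (((X:ℝ[X])^2 - 1) ^ N)).eval x := by
    intro x; simp [legendre, hN]
  have step1 : ∫ x in (-1:ℝ)..1, x^(2*n+1) * (legendre N).eval x
      = (1 / (2^N * (N.factorial : ℝ))) *
        ∫ x in (-1:ℝ)..1, ((X:ℝ[X])^(2*n+1)).eval x
          * (derivative^[N] (((X:ℝ[X])^2 - 1) ^ N)).eval x := by
    rw [← intervalIntegral.integral_const_mul]
    congr 1; ext x; rw [hleg]; simp; ring
  rw [step1, iter_parts _ N N le_rfl]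
  have hD : derivative^[N] ((X:ℝ[X])^(2*n+1)) = 0 := by
    rw [Polynomial.iterate_derivative_X_pow_eq_natCast_mul]
    have : (2*n+1).descFactorial N = 0 := Nat.descFactorial_eq_zero_iff_lt.2 (by omega)
    simp only [this, Nat.cast_zero, zero_mul]
  rw [hD]
  simp

lemma subst_lemma (l : ℝ) (hl : 0 < l) (M n : ℕ) :
    ∫ x in (-l)..l, x ^ (2*n+1) * eFun M l x
      = Real.sqrt (2 * M + 1) * l * l^(2*n+1)
          * ∫ t in (-1:ℝ)..1, t^(2*n+1) * (legendre M).eval t := by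
  have hl0 : l ≠ 0 := ne_of_gt hl
  have hcongr : ∀ x : ℝ, x ^ (2*n+1) * eFun M l x
      = (fun t : ℝ => Real.sqrt (2 * M + 1) * ((l*t)^(2*n+1) * (legendre M).eval t)) (x / l) := by
    intro x
    simp only [eFun]
    rw [mul_div_cancel₀ _ hl0]
    ring
  calc ∫ x in (-l)..l, x ^ (2*n+1) * eFun M l x
      = ∫ x in (-l)..l, (fun t : ℝ => Real.sqrt (2 * M + 1)
          * ((l*t)^(2*n+1) * (legendre M).eval t)) (x / l) := by
        apply intervalIntegral.integral_congr
        intro x _; exact hcongr x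
    _ = l • ∫ t in (-l/l)..(l/l), Real.sqrt (2 * M + 1)
          * ((l*t)^(2*n+1) * (legendre M).eval t) := by
        exact intervalIntegral.integral_comp_div
          (fun t : ℝ => Real.sqrt (2 * M + 1) * ((l*t)^(2*n+1) * (legendre M).eval t)) hl0
    _ = Real.sqrt (2 * M + 1) * l * l^(2*n+1)
          * ∫ t in (-1:ℝ)..1, t^(2*n+1) * (legendre M).eval t := by
        rw [neg_div, div_self hl0, smul_eq_mul, ← intervalIntegral.integral_const_mul]
        rw [← intervalIntegral.integral_const_mul]
        congr 1; ext t
        rw [mul_pow]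
        ring

theorem inner_pow_odd_eFun_odd (l : ℝ) (hl : 0 < l) (m n : ℕ) :
    (m ≤ n →
      (1 / (2 * l)) * ∫ x in (-l)..l, x ^ (2 * n + 1) * eFun (2 * m + 1) l x =
        Real.sqrt (4 * m + 3) * 2 ^ (2 * m + 1) * l ^ (2 * n + 1)
          * (((2 * n + 1).factorial : ℝ) * ((m + n + 1).factorial : ℝ))
          / (((n - m).factorial : ℝ) * ((2 * (m + n + 1) + 1).factorial : ℝ))) ∧
    (n < m → (1 / (2 * l)) * ∫ x in (-l)..l, x ^ (2 * n + 1) * eFun (2 * m + 1) l x = 0) := by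
  have hl0 : l ≠ 0 := ne_of_gt hl
  have hsq : Real.sqrt (2 * ((2*m+1:ℕ):ℝ) + 1) = Real.sqrt (4 * m + 3) := by
    congr 1; push_cast; ring
  constructor
  · intro h
    rw [subst_lemma l hl (2*m+1) n, legendre_moment_le m n h, hsq]
    have h1 : (2:ℝ) * (m:ℝ) + 2 ≠ 0 := by positivity
    have hf1 : ((n-m).factorial : ℝ) ≠ 0 := Nat.cast_ne_zero.2 (Nat.factorial_ne_zero _)
    have hf2 : ((2*(m+n+1)+1).factorial : ℝ) ≠ 0 := Nat.cast_ne_zero.2 (Nat.factorial_ne_zero _)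
    field_simp
    ring
  · intro h
    rw [subst_lemma l hl (2*m+1) n, legendre_moment_lt m n h]
    ring
end

section
/- Let l > 0, let M < N be natural numbers, p = ⌊M/2⌋, q = ⌊N/2⌋. For all m ∈ {0,...,p} and n ∈ {p+1,...,q}, the (2m, 2n) entry of the matrix V^{[M,N,l]} = (T^{[M,M,l]})^{-1} T^{[M,N,l]} equals ( (-1)^{p-m} l^{2(n-m)} (2n)! ) / ( 2^{n-m} (n-m)! (p-m)! (2m)! ) · ∏_{r=n-p}^{n-m-1} r · ∏_{r=p+m+1}^{p+n} 1/(2r+1). -/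
open Polynomial

/-- The `(M+1) × (N+1)` projection matrix `T^{[M,N,l]}`. -/
noncomputable def Tmat (M N : ℕ) (l : ℝ) : Matrix (Fin (M + 1)) (Fin (N + 1)) ℝ :=
  fun m n => (1 / (2 * l)) * ∫ x in (-l)..l, x ^ (n : ℕ) * eFun (m : ℕ) l x

/-- The matrix `V^{[M,N,l]} = (T^{[M,M,l]})⁻¹ T^{[M,N,l]}` of the degree-reduction map
in the canonical basis. -/
noncomputable def Vmat (M N : ℕ) (l : ℝ) : Matrix (Fin (M + 1)) (Fin (N + 1)) ℝ :=
  (Tmat M M l)⁻¹ * Tmat M N l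

noncomputable def Iint (p : Polynomial ℝ) : ℝ := ∫ x in (-1:ℝ)..1, p.eval x

lemma pii (p : ℝ[X]) : IntervalIntegrable (fun x => p.eval x) MeasureTheory.volume (-1:ℝ) 1 :=
  p.continuous.intervalIntegrable _ _

lemma Iint_add (p q : ℝ[X]) : Iint (p + q) = Iint p + Iint q := by
  simp only [Iint, eval_add]
  exact intervalIntegral.integral_add (pii p) (pii q)

lemma Iint_smul (c : ℝ) (p : ℝ[X]) : Iint (c • p) = c * Iint p := by
  simp only [Iint, eval_smul, smul_eq_mul]
  rw [← intervalIntegral.integral_const_mul]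

lemma Iint_C_mul (c : ℝ) (p : ℝ[X]) : Iint (C c * p) = c * Iint p := by
  rw [← smul_eq_C_mul, Iint_smul]

lemma Iint_zero : Iint 0 = 0 := by simp [Iint]

lemma Iint_finset_sum {α : Type*} (s : Finset α) (f : α → ℝ[X]) :
    Iint (∑ i ∈ s, f i) = ∑ i ∈ s, Iint (f i) := by
  classical
  induction s using Finset.induction_on with
  | empty => simp [Iint_zero]
  | insert _ _ h ih => rw [Finset.sum_insert h, Finset.sum_insert h, Iint_add, ih]

lemma Iint_mul_derivative (p q : ℝ[X]) :
    Iint (p * derivative q) =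
      p.eval 1 * q.eval 1 - p.eval (-1) * q.eval (-1) - Iint (derivative p * q) := by
  have h := intervalIntegral.integral_deriv_mul_eq_sub (a := (-1:ℝ)) (b := 1)
    (u := fun x => p.eval x) (v := fun x => q.eval x)
    (u' := fun x => (derivative p).eval x) (v' := fun x => (derivative q).eval x)
    (fun x _ => p.hasDerivAt x) (fun x _ => q.hasDerivAt x)
    (pii _) (pii _)
  have h2 : Iint (derivative p * q) + Iint (p * derivative q)
      = p.eval 1 * q.eval 1 - p.eval (-1) * q.eval (-1) := by
    rw [Iint, Iint, ← intervalIntegral.integral_add (pii _) (pii _)]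
    simpa [eval_mul] using h
  linarith

lemma pow_dvd_iterate_derivative (m : ℕ) :
    ∀ j, j ≤ m → ((X^2 - 1 : ℝ[X]))^(m - j) ∣ derivative^[j] ((X^2 - 1)^m) := by
  intro j
  induction j with
  | zero => intro _; simp
  | succ j ih =>
    intro hj
    obtain ⟨g, hg⟩ := ih (le_of_lt hj)
    have h1 : m - j = (m - (j+1)) + 1 := by omega
    rw [Function.iterate_succ_apply', hg, h1, derivative_mul]
    refine dvd_add (Dvd.dvd.mul_right ?_ g) (dvd_mul_of_dvd_left (pow_dvd_pow _ (by omega)) _)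
    rw [derivative_pow]
    exact dvd_mul_of_dvd_left (dvd_mul_left _ _) _

lemma eval_iterate_derivative_eq_zero (m j : ℕ) (h : j < m) (x : ℝ) (hx : x^2 - 1 = 0) :
    (derivative^[j] ((X^2 - 1 : ℝ[X])^m)).eval x = 0 := by
  obtain ⟨g, hg⟩ := pow_dvd_iterate_derivative m j (le_of_lt h)
  rw [hg, eval_mul, eval_pow]
  have : (X^2 - 1 : ℝ[X]).eval x = 0 := by simpa using hx
  rw [this, zero_pow (by omega), zero_mul]

lemma Iint_iterate (m : ℕ) :
    ∀ k, k ≤ m → ∀ p : ℝ[X],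
      Iint (p * derivative^[k] ((X^2 - 1 : ℝ[X])^m))
        = (-1:ℝ)^k * Iint (derivative^[k] p * (X^2 - 1)^m) := by
  intro k
  induction k with
  | zero => intro _ p; simp
  | succ k ih =>
    intro hk p
    rw [Function.iterate_succ_apply', Iint_mul_derivative,
      eval_iterate_derivative_eq_zero m k (by omega) 1 (by norm_num),
      eval_iterate_derivative_eq_zero m k (by omega) (-1) (by norm_num)]
    rw [ih (by omega) (derivative p), ← Function.iterate_succ_apply]
    ring

lemma fac_ne (n : ℕ) : ((n.factorial : ℝ)) ≠ 0 := by
  exact_mod_cast n.factorial_pos.ne'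

lemma Iint_X_pow_even (a : ℕ) : Iint (X^(2*a) : ℝ[X]) = 2 / (2*a+1) := by
  have h : Iint (X^(2*a) : ℝ[X]) = ∫ x in (-1:ℝ)..1, x^(2*a) := by
    simp [Iint]
  rw [h, integral_pow]
  have h1 : ((-1:ℝ))^(2*a+1) = -1 := by
    rw [pow_succ, pow_mul]; norm_num
  rw [h1]
  push_cast
  ring

lemma Jval_s16 (a : ℕ) : ∀ m : ℕ, Iint (X^(2*a) * (X^2 - 1 : ℝ[X])^m) =
    (-1:ℝ)^m * 2^(2*m+1) * ((m.factorial : ℝ) * ((a+m).factorial : ℝ) * ((2*a).factorial : ℝ))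
      / (((2*a+2*m+1).factorial : ℝ) * (a.factorial : ℝ)) := by
  intro m
  induction m with
  | zero =>
    rw [pow_zero, mul_one, Iint_X_pow_even]
    have h : ((2*a+2*0+1).factorial : ℝ) = (2*(a:ℝ)+1) * ((2*a).factorial : ℝ) := by
      have e : 2*a+2*0+1 = (2*a) + 1 := by omega
      rw [e, Nat.factorial_succ]; push_cast; ring
    rw [h]
    simp only [Nat.factorial_zero, Nat.cast_one]
    rw [div_eq_div_iff (by positivity) (by positivity)]
    ring
  | succ m ih =>
    set A := Iint (X^(2*a) * (X^2 - 1 : ℝ[X])^(m+1)) with hA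
    set B := Iint (X^(2*a) * (X^2 - 1 : ℝ[X])^m) with hB
    set c : ℝ := (2*(a:ℝ)+1)⁻¹ with hc
    have hcne : (2*(a:ℝ)+1) ≠ 0 := by positivity
    have hder : derivative (C c * X^(2*a+1)) = (X^(2*a) : ℝ[X]) := by
      rw [derivative_C_mul, derivative_X_pow]
      have e : (2*a+1-1) = 2*a := by omega
      rw [e, ← mul_assoc, ← C_mul]
      have hone : c * ((2*a+1 : ℕ) : ℝ) = 1 := by
        push_cast
        rw [hc, inv_mul_cancel₀ hcne]
      rw [hone, C_1, one_mul]
    have hpoly : derivative ((X^2 - 1 : ℝ[X])^(m+1)) * (C c * X^(2*a+1))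
        = C (((m:ℝ)+1)) * (C 2 * (C c * (X^(2*a+2) * (X^2 - 1 : ℝ[X])^m))) := by
      rw [derivative_pow]
      have h2 : derivative (X^2 - 1 : ℝ[X]) = C 2 * X := by
        rw [derivative_sub, derivative_one, derivative_X_pow]
        simp
      rw [h2]
      have e : m + 1 - 1 = m := by omega
      rw [e]
      push_cast
      ring
    have hsplit : (X:ℝ[X])^(2*a+2) * (X^2 - 1 : ℝ[X])^m
        = X^(2*a) * (X^2 - 1 : ℝ[X])^(m+1) + X^(2*a) * (X^2 - 1 : ℝ[X])^m := by
      ring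
    have h0 : Iint ((X^2 - 1 : ℝ[X])^(m+1) * X^(2*a))
        = - Iint (derivative ((X^2 - 1 : ℝ[X])^(m+1)) * (C c * X^(2*a+1))) := by
      have hb := Iint_mul_derivative ((X^2 - 1 : ℝ[X])^(m+1)) (C c * X^(2*a+1))
      rw [hder] at hb
      rw [hb]
      have e1 : Polynomial.eval 1 ((X^2 - 1 : ℝ[X])^(m+1)) = 0 := by simp
      have e2 : Polynomial.eval (-1) ((X^2 - 1 : ℝ[X])^(m+1)) = 0 := by simp
      rw [e1, e2]; ring
    have h1 : A = -(((m:ℝ)+1) * (2 * (c * (A + B)))) := by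
      have hcomm : A = Iint ((X^2 - 1 : ℝ[X])^(m+1) * X^(2*a)) := by
        rw [hA, mul_comm]
      conv_lhs => rw [hcomm, h0, hpoly]
      rw [Iint_C_mul, Iint_C_mul, Iint_C_mul, hsplit, Iint_add, ← hA, ← hB]
    have keyclean : (2*(a:ℝ)+1) * A = -(2*(m:ℝ)+2) * (A + B) := by
      rw [hc] at h1
      field_simp at h1
      linarith [h1]
    have hAval : A = -(2*(m:ℝ)+2) / (2*(a:ℝ)+2*(m:ℝ)+3) * B := by
      have hd : (2*(a:ℝ)+2*(m:ℝ)+3) ≠ 0 := by positivity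
      rw [div_mul_eq_mul_div, eq_div_iff hd]
      linear_combination keyclean
    rw [hAval, ih]
    have f1 : (((m+1).factorial : ℝ)) = ((m:ℝ)+1) * (m.factorial : ℝ) := by
      rw [Nat.factorial_succ]; push_cast; ring
    have f2 : (((a+(m+1)).factorial : ℝ)) = ((a:ℝ)+(m:ℝ)+1) * ((a+m).factorial : ℝ) := by
      have e : a+(m+1) = (a+m)+1 := by omega
      rw [e, Nat.factorial_succ]; push_cast; ring
    have f3 : (((2*a+2*(m+1)+1).factorial : ℝ))
        = (2*(a:ℝ)+2*(m:ℝ)+3) * (2*(a:ℝ)+2*(m:ℝ)+2) * ((2*a+2*m+1).factorial : ℝ) := by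
      have e : 2*a+2*(m+1)+1 = ((2*a+2*m+1)+1)+1 := by omega
      rw [e, Nat.factorial_succ, Nat.factorial_succ]; push_cast; ring
    rw [f1, f2, f3]
    have hd1 : (2*(a:ℝ)+2*(m:ℝ)+3) ≠ 0 := by positivity
    have hd2 : (2*(a:ℝ)+2*(m:ℝ)+2) ≠ 0 := by positivity
    field_simp
    ring

lemma Iint_mul_legendre (m : ℕ) (p : ℝ[X]) :
    Iint (p * legendre m)
      = (1 / (2^m * (m.factorial : ℝ))) * ((-1:ℝ)^m * Iint (derivative^[m] p * (X^2 - 1)^m)) := by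
  rw [legendre, mul_smul_comm, Iint_smul, Iint_iterate m m le_rfl]

lemma Iint_vanish (m t : ℕ) (h : t < m) : Iint (X^t * legendre m) = 0 := by
  rw [Iint_mul_legendre]
  have hz : derivative^[m] (X^t : ℝ[X]) = 0 := by
    apply Polynomial.iterate_derivative_eq_zero
    simpa [natDegree_X_pow] using h
  rw [hz, zero_mul, Iint_zero]
  ring

lemma Iint_moment (m d : ℕ) : Iint (X^(m+2*d) * legendre m) =
    2^(m+1) * (((m+2*d).factorial : ℝ) * ((m+d).factorial : ℝ))
      / ((d.factorial : ℝ) * ((2*m+2*d+1).factorial : ℝ)) := by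
  rw [Iint_mul_legendre]
  rw [iterate_derivative_X_pow_eq_C_mul]
  have e : m + 2*d - m = 2*d := by omega
  rw [e, mul_assoc, Iint_C_mul]
  rw [Jval_s16 d m]
  have hdesc : (((m+2*d).descFactorial m : ℕ) : ℝ) * ((2*d).factorial : ℝ) = ((m+2*d).factorial : ℝ) := by
    rw [← Nat.cast_mul, mul_comm]
    norm_cast
    have := Nat.factorial_mul_descFactorial (n := m+2*d) (k := m) (by omega)
    simpa [e] using this
  have e2 : d + m = m + d := by omega
  have e3 : 2*d+2*m+1 = 2*m+2*d+1 := by omega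
  have h2 : (2:ℝ)^(2*m+1) = 2^m * 2^(m+1) := by
    rw [← pow_add]; congr 1; omega
  rw [e2, e3, h2, ← hdesc]
  rcases Nat.even_or_odd m with hpar | hpar
  · rw [hpar.neg_one_pow]
    field_simp
  · rw [hpar.neg_one_pow]
    field_simp

lemma sq_sub_one_pow_coeff (m s : ℕ) :
    ((X^2 - 1 : ℝ[X])^m).coeff s =
      if s % 2 = 0 ∧ s ≤ 2*m then (-1:ℝ)^(m - s/2) * (m.choose (s/2)) else 0 := by
  have hexp : (X^2 - 1 : ℝ[X])^m
      = ∑ i ∈ Finset.range (m+1), C ((-1:ℝ)^(m-i) * (m.choose i)) * X^(2*i) := by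
    rw [sub_eq_add_neg, add_pow]
    apply Finset.sum_congr rfl
    intro i _
    rw [← pow_mul]
    have h1 : ((-1 : ℝ[X]))^(m-i) = C ((-1:ℝ)^(m-i)) := by
      rw [map_pow, map_neg, map_one]
    have h2 : ((m.choose i : ℕ) : ℝ[X]) = C ((m.choose i : ℝ)) := by
      rw [C_eq_natCast]
    rw [h1, h2, mul_assoc, ← C_mul]
    exact mul_comm _ _
  rw [hexp, finset_sum_coeff]
  simp only [coeff_C_mul, coeff_X_pow, mul_ite, mul_one, mul_zero]
  by_cases h : s % 2 = 0 ∧ s ≤ 2*m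
  · rw [if_pos h]
    rw [Finset.sum_eq_single (s/2)]
    · rw [if_pos (by omega)]
    · intro i _ hne
      rw [if_neg (by omega)]
    · intro hmem
      exfalso
      apply hmem
      simp only [Finset.mem_range]
      omega
  · rw [if_neg h]
    apply Finset.sum_eq_zero
    intro i hi
    simp only [Finset.mem_range] at hi
    rw [if_neg (by omega)]

lemma legendre_coeff (m t : ℕ) : (legendre m).coeff t
    = (1/(2^m * (m.factorial:ℝ))) * (((t+m).descFactorial m : ℕ) : ℝ)
        * (((X^2-1:ℝ[X])^m).coeff (t+m)) := by
  rw [legendre, coeff_smul, coeff_iterate_derivative, smul_eq_mul, nsmul_eq_mul]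
  ring

lemma legendre_coeff_zero_of_parity (k t : ℕ) (h : (t + k) % 2 = 1) :
    (legendre k).coeff t = 0 := by
  rw [legendre_coeff, sq_sub_one_pow_coeff, if_neg (by omega), mul_zero]

lemma legendre_coeff_zero_of_gt (k t : ℕ) (h : k < t) : (legendre k).coeff t = 0 := by
  rw [legendre_coeff, sq_sub_one_pow_coeff, if_neg (by omega), mul_zero]

lemma legendre_coeff_even (j m : ℕ) (h : m ≤ j) : (legendre (2*j)).coeff (2*m)
    = (1/(2^(2*j) * (((2*j).factorial:ℝ)))) * (((2*m+2*j).descFactorial (2*j) : ℕ) : ℝ)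
        * ((-1:ℝ)^(j-m) * (((2*j).choose (j+m) : ℕ) : ℝ)) := by
  rw [legendre_coeff, sq_sub_one_pow_coeff]
  have e1 : (2*m+2*j) / 2 = m + j := by omega
  have e2 : 2*j - (m+j) = j - m := by omega
  rw [if_pos (by omega), e1, e2, Nat.add_comm m j]

lemma legendre_coeff_self (m : ℕ) : (legendre m).coeff m
    = ((2*m).factorial : ℝ) / (2^m * (m.factorial:ℝ) * (m.factorial:ℝ)) := by
  rw [legendre_coeff, sq_sub_one_pow_coeff]
  have e1 : (m+m) / 2 = m := by omega
  rw [if_pos (by omega), e1, Nat.sub_self, pow_zero, Nat.choose_self]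
  have hdesc : ((m.factorial : ℕ) : ℝ) * (((m+m).descFactorial m : ℕ) : ℝ) = ((2*m).factorial : ℝ) := by
    rw [← Nat.cast_mul]
    norm_cast
    have := Nat.factorial_mul_descFactorial (n := m+m) (k := m) (by omega)
    rw [show m + m - m = m by omega] at this
    rw [this]
    congr 1
    omega
  field_simp
  linear_combination hdesc

lemma legendre_natDegree_le (m : ℕ) : (legendre m).natDegree ≤ m := by
  rw [legendre]
  refine le_trans (natDegree_smul_le _ _) (le_trans (natDegree_iterate_derivative _ _) ?_)
  have h1 : ((X^2 - 1 : ℝ[X])^m).natDegree ≤ 2*m := by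
    refine le_trans (natDegree_pow_le) ?_
    have h0 : (X^2 - 1 : ℝ[X]).natDegree ≤ 2 := by
      refine le_trans (natDegree_sub_le _ _) ?_
      simp [natDegree_X_pow]
    calc m * (X^2 - 1 : ℝ[X]).natDegree ≤ m * 2 := Nat.mul_le_mul_left m h0
      _ = 2*m := by ring
  omega

lemma sum_coeff_Iint (p q : ℝ[X]) (Mn : ℕ) (h : q.natDegree < Mn) :
    ∑ j ∈ Finset.range Mn, q.coeff j * Iint (X^j * p) = Iint (q * p) := by
  conv_rhs => rw [Polynomial.as_sum_range' q Mn h]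
  rw [Finset.sum_mul, Iint_finset_sum]
  apply Finset.sum_congr rfl
  intro j _
  rw [← C_mul_X_pow_eq_monomial, mul_assoc, Iint_C_mul]

lemma Iint_legendre_mul_legendre (k m : ℕ) :
    Iint (legendre k * legendre m) = if k = m then 2/(2*(m:ℝ)+1) else 0 := by
  have main : ∀ k m : ℕ, k ≤ m → Iint (legendre k * legendre m) = if k = m then 2/(2*(m:ℝ)+1) else 0 := by
    intro k m hkm
    rw [← sum_coeff_Iint (legendre m) (legendre k) (k+1)
      (lt_of_le_of_lt (legendre_natDegree_le k) (by omega))]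
    rcases eq_or_lt_of_le hkm with heq | hlt
    · subst heq
      rw [if_pos rfl]
      rw [Finset.sum_eq_single k]
      · have hm : Iint (X^k * legendre k) = 2^(k+1) * ((k.factorial : ℝ) * (k.factorial : ℝ))
            / ((Nat.factorial 0 : ℝ) * ((2*k+1).factorial : ℝ)) := by
          have := Iint_moment k 0
          simpa using this
        rw [hm, legendre_coeff_self]
        have hfs : ((2*k+1).factorial : ℝ) = (2*(k:ℝ)+1) * ((2*k).factorial : ℝ) := by
          rw [Nat.factorial_succ]; push_cast; ring
        rw [hfs]
        simp only [Nat.factorial_zero, Nat.cast_one, one_mul]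
        have h2 : (2:ℝ)^(k+1) = 2^k * 2 := by rw [pow_succ]
        rw [h2]
        field_simp
      · intro j hj hne
        rw [Iint_vanish k j (by simp only [Finset.mem_range] at hj; omega), mul_zero]
      · intro hmem
        exfalso
        exact hmem (by simp)
    · rw [if_neg (by omega)]
      apply Finset.sum_eq_zero
      intro j hj
      simp only [Finset.mem_range] at hj
      rw [Iint_vanish m j (by omega), mul_zero]
  rcases le_or_gt k m with h | h
  · exact main k m h
  · rw [mul_comm, main m k (le_of_lt h)]
    have : ¬ (m = k) := by omega
    rw [if_neg this, if_neg (by omega)]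

lemma Tmat_apply (M N : ℕ) (l : ℝ) (hl : l ≠ 0) (m : Fin (M+1)) (n : Fin (N+1)) :
    Tmat M N l m n
      = Real.sqrt (2*(m:ℕ)+1) * l^(n:ℕ) * (Iint (X^(n:ℕ) * legendre (m:ℕ)) / 2) := by
  rw [Tmat]
  have hint : (∫ x in (-l)..l, x ^ (n:ℕ) * eFun (m:ℕ) l x)
      = ∫ x in (-l)..l, Real.sqrt (2*(m:ℕ)+1)
          * ((fun y => (l*y)^(n:ℕ) * (legendre (m:ℕ)).eval y) (x/l)) := by
    apply intervalIntegral.integral_congr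
    intro x _
    simp only [eFun]
    have hx : l * (x / l) = x := by field_simp
    rw [hx]
    push_cast
    ring
  rw [hint, intervalIntegral.integral_const_mul,
    intervalIntegral.integral_comp_div (f := fun y => (l*y)^(n:ℕ) * (legendre (m:ℕ)).eval y) hl]
  rw [neg_div, div_self hl]
  have hinner : (∫ y in (-1:ℝ)..1, (l*y)^(n:ℕ) * (legendre (m:ℕ)).eval y)
      = l^(n:ℕ) * Iint (X^(n:ℕ) * legendre (m:ℕ)) := by
    unfold Iint
    rw [← intervalIntegral.integral_const_mul]
    apply intervalIntegral.integral_congr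
    intro y _
    simp only [eval_mul, eval_pow, eval_X, mul_pow]
    ring
  rw [hinner, smul_eq_mul]
  field_simp

noncomputable def Bmat (M : ℕ) (l : ℝ) : Matrix (Fin (M+1)) (Fin (M+1)) ℝ :=
  fun j k => Real.sqrt (2*(k:ℕ)+1) * (l⁻¹)^(j:ℕ) * (legendre (k:ℕ)).coeff (j:ℕ)

lemma TB (M : ℕ) (l : ℝ) (hl : l ≠ 0) : Tmat M M l * Bmat M l = 1 := by
  ext m k
  rw [Matrix.mul_apply, Matrix.one_apply]
  have hterm : ∀ j : Fin (M+1), Tmat M M l m j * Bmat M l j k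
      = (Real.sqrt (2*(m:ℕ)+1) * Real.sqrt (2*(k:ℕ)+1) / 2)
        * ((fun jj => (legendre (k:ℕ)).coeff jj * Iint (X^jj * legendre (m:ℕ))) (j:ℕ)) := by
    intro j
    rw [Tmat_apply M M l hl, Bmat]
    have hll : l^(j:ℕ) * (l⁻¹)^(j:ℕ) = 1 := by
      rw [← mul_pow, mul_inv_cancel₀ hl, one_pow]
    simp only []
    linear_combination (Real.sqrt (2*(m:ℕ)+1) * Real.sqrt (2*(k:ℕ)+1)
      * (legendre (k:ℕ)).coeff (j:ℕ) * Iint (X^(j:ℕ) * legendre (m:ℕ)) / 2) * hll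
  rw [Finset.sum_congr rfl (fun j _ => hterm j), ← Finset.mul_sum]
  rw [Fin.sum_univ_eq_sum_range (fun jj => (legendre (k:ℕ)).coeff jj * Iint (X^jj * legendre (m:ℕ))) (M+1)]
  rw [sum_coeff_Iint (legendre (m:ℕ)) (legendre (k:ℕ)) (M+1)
    (lt_of_le_of_lt (legendre_natDegree_le _) (by omega))]
  rw [Iint_legendre_mul_legendre]
  by_cases h : m = k
  · subst h
    rw [if_pos rfl, if_pos rfl]
    have hnn : (0:ℝ) ≤ 2*(m:ℕ)+1 := by positivity
    rw [Real.mul_self_sqrt hnn]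
    have : (2*((m:ℕ):ℝ)+1) ≠ 0 := by positivity
    field_simp
  · have h2 : ¬ ((k:ℕ) = (m:ℕ)) := by
      intro hc
      exact h (Fin.ext hc.symm)
    rw [if_neg h2, if_neg h]
    ring

lemma Tmm_inv (M : ℕ) (l : ℝ) (hl : l ≠ 0) : (Tmat M M l)⁻¹ = Bmat M l :=
  Matrix.inv_eq_right_inv (TB M l hl)

lemma Vmat_apply (M N : ℕ) (l : ℝ) (hl : l ≠ 0) (a : Fin (M+1)) (b : Fin (N+1)) :
    Vmat M N l a b = ∑ k ∈ Finset.range (M+1),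
      (2*(k:ℝ)+1) * ((l⁻¹)^(a:ℕ) * l^(b:ℕ))
        * ((legendre k).coeff (a:ℕ) * (Iint (X^(b:ℕ) * legendre k) / 2)) := by
  rw [Vmat, Tmm_inv M l hl, Matrix.mul_apply]
  have hterm : ∀ j : Fin (M+1), Bmat M l a j * Tmat M N l j b
      = (fun (kk:ℕ) => (2*(kk:ℝ)+1) * ((l⁻¹)^(a:ℕ) * l^(b:ℕ))
          * ((legendre kk).coeff (a:ℕ) * (Iint (X^(b:ℕ) * legendre kk) / 2))) (j:ℕ) := by
    intro j
    rw [Tmat_apply M N l hl, Bmat]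
    simp only []
    have hnn : (0:ℝ) ≤ 2*(j:ℕ)+1 := by positivity
    have hs : Real.sqrt (2*(j:ℕ)+1) * Real.sqrt (2*(j:ℕ)+1) = 2*(j:ℕ)+1 :=
      Real.mul_self_sqrt hnn
    linear_combination ((l⁻¹)^(a:ℕ) * l^(b:ℕ) * (legendre (j:ℕ)).coeff (a:ℕ)
      * (Iint (X^(b:ℕ) * legendre (j:ℕ)) / 2)) * hs
  rw [Finset.sum_congr rfl (fun j _ => hterm j)]
  rw [Fin.sum_univ_eq_sum_range (fun (kk:ℕ) => (2*(kk:ℝ)+1) * ((l⁻¹)^(a:ℕ) * l^(b:ℕ))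
      * ((legendre kk).coeff (a:ℕ) * (Iint (X^(b:ℕ) * legendre kk) / 2))) (M+1)]

lemma fac_prod_Icc (a : ℕ) : ∀ b : ℕ, a ≤ b →
    a.factorial * ∏ r ∈ Finset.Icc (a+1) b, r = b.factorial := by
  intro b hb
  induction b, hb using Nat.le_induction with
  | base =>
    rw [Finset.Icc_eq_empty_of_lt (by omega), Finset.prod_empty, mul_one]
  | succ b hb ih =>
    rw [Finset.prod_Icc_succ_top (by omega : a+1 ≤ b+1), ← mul_assoc, ih,
      Nat.factorial_succ]
    ring

lemma odd_prod_Icc (c : ℕ) : ∀ b : ℕ, c ≤ b →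
    (2*c+1).factorial * 2^b * b.factorial * ∏ r ∈ Finset.Icc (c+1) b, (2*r+1)
      = (2*b+1).factorial * 2^c * c.factorial := by
  intro b hb
  induction b, hb using Nat.le_induction with
  | base =>
    rw [Finset.Icc_eq_empty_of_lt (by omega), Finset.prod_empty, mul_one]
  | succ b hb ih =>
    rw [Finset.prod_Icc_succ_top (by omega : c+1 ≤ b+1)]
    have e1 : (2*(b+1)+1).factorial = (2*b+3) * ((2*b+2) * (2*b+1).factorial) := by
      rw [show 2*(b+1)+1 = ((2*b+1)+1)+1 by ring, Nat.factorial_succ, Nat.factorial_succ]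
    rw [e1, Nat.factorial_succ b, pow_succ]
    calc (2*c+1).factorial * (2^b*2) * ((b+1) * b.factorial)
          * ((∏ r ∈ Finset.Icc (c+1) b, (2*r+1)) * (2*(b+1)+1))
        = ((2*c+1).factorial * 2^b * b.factorial * ∏ r ∈ Finset.Icc (c+1) b, (2*r+1))
            * (2 * (b+1) * (2*(b+1)+1)) := by ring
      _ = (2*b+3) * ((2*b+2) * (2*b+1).factorial) * 2^c * c.factorial := by
          rw [ih]; ring

set_option maxHeartbeats 1000000 in
lemma key_sum (m n : ℕ) : ∀ p : ℕ, m ≤ p → p < n →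
    ∑ j ∈ Finset.Icc m p,
      ((4*(j:ℝ)+1) * ((-1:ℝ)^(j-m) * (((2*j+2*m).factorial:ℕ):ℝ) * (((n+j).factorial:ℕ):ℝ))
        / ((((j+m).factorial:ℕ):ℝ) * (((j-m).factorial:ℕ):ℝ) * (((n-j).factorial:ℕ):ℝ)
            * (((2*n+2*j+1).factorial:ℕ):ℝ)))
    = (-1:ℝ)^(p-m) * (((n-m-1).factorial:ℕ):ℝ) * (((2*p+2*m+1).factorial:ℕ):ℝ)
          * (((p+n).factorial:ℕ):ℝ)
        / ((((n-m).factorial:ℕ):ℝ) * (((p-m).factorial:ℕ):ℝ) * (((n-p-1).factorial:ℕ):ℝ)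
            * (((p+m).factorial:ℕ):ℝ) * (((2*p+2*n+1).factorial:ℕ):ℝ)) := by
  intro p hp
  induction p, hp using Nat.le_induction with
  | base =>
    intro hn
    obtain ⟨b, hb⟩ : ∃ b, n = m + 1 + b := ⟨n - m - 1, by omega⟩
    subst hb
    rw [Finset.Icc_self, Finset.sum_singleton]
    rw [show m - m = 0 by omega, show m+1+b-m-1 = b by omega, show m+1+b-m = b+1 by omega]
    rw [show 2*(m+1+b)+2*m+1 = 4*m+2*b+3 by ring, show 2*m+2*(m+1+b)+1 = 4*m+2*b+3 by ring,
      show m+1+b+m = 2*m+1+b by ring, show m+(m+1+b) = 2*m+1+b by ring,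
      show 2*m+2*m = 4*m by ring,
      show m+m = 2*m by ring]
    rw [show (4*m+1).factorial = (4*m+1) * (4*m).factorial from Nat.factorial_succ _,
      Nat.factorial_succ b]
    push_cast
    simp only [Nat.factorial_zero, Nat.cast_one]
    field_simp
  | succ p hp ih =>
    intro hn
    have hIH := ih (by omega)
    rw [Finset.sum_Icc_succ_top (by omega : m ≤ p+1), hIH]
    obtain ⟨a, ha⟩ : ∃ a, p = m + a := ⟨p - m, by omega⟩
    subst ha
    obtain ⟨b, hb⟩ : ∃ b, n = m + a + 2 + b := ⟨n - (m+a) - 2, by omega⟩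
    subst hb
    -- normalize subtraction arguments
    rw [show m+a-m = a by omega, show m+a+1-m = a+1 by omega,
      show m+a+2+b-m-1 = a+b+1 by omega, show m+a+2+b-m = a+b+2 by omega,
      show m+a+2+b-(m+a)-1 = b+1 by omega, show m+a+2+b-(m+a+1)-1 = b by omega,
      show m+a+2+b-(m+a+1) = b+1 by omega]
    -- normalize addition arguments
    rw [show 2*(m+a)+2*m+1 = 4*m+2*a+1 by ring,
      show 2*(m+a+1)+2*m = 4*m+2*a+2 by ring,
      show 4*m+2*a+2+1 = 4*m+2*a+3 by ring,
      show (m+a)+(m+a+2+b) = 2*m+2*a+2+b by ring,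
      show (m+a+2+b)+(m+a+1) = 2*m+2*a+3+b by ring,
      show (m+a+1)+(m+a+2+b) = 2*m+2*a+3+b by ring,
      show (m+a)+m = 2*m+a by ring,
      show (m+a+1)+m = 2*m+a+1 by ring,
      show 2*(m+a)+2*(m+a+2+b)+1 = 4*m+4*a+2*b+5 by ring,
      show 2*(m+a+2+b)+2*(m+a+1)+1 = 4*m+4*a+2*b+7 by ring,
      show 2*(m+a+1)+2*(m+a+2+b)+1 = 4*m+4*a+2*b+7 by ring]
    -- factorial reductions
    rw [show (2*m+2*a+3+b).factorial = (2*m+2*a+3+b) * (2*m+2*a+2+b).factorial by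
        rw [show 2*m+2*a+3+b = (2*m+2*a+2+b)+1 by ring, Nat.factorial_succ],
      show (4*m+2*a+2).factorial = (4*m+2*a+2) * (4*m+2*a+1).factorial by
        rw [show 4*m+2*a+2 = (4*m+2*a+1)+1 by ring, Nat.factorial_succ],
      show (4*m+2*a+3).factorial = (4*m+2*a+3) * ((4*m+2*a+2) * (4*m+2*a+1).factorial) by
        rw [show 4*m+2*a+3 = ((4*m+2*a+1)+1)+1 by ring, Nat.factorial_succ,
          Nat.factorial_succ],
      show (2*m+a+1).factorial = (2*m+a+1) * (2*m+a).factorial from Nat.factorial_succ _,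
      show (4*m+4*a+2*b+7).factorial
          = (4*m+4*a+2*b+7) * ((4*m+4*a+2*b+6) * (4*m+4*a+2*b+5).factorial) by
        rw [show 4*m+4*a+2*b+7 = ((4*m+4*a+2*b+5)+1)+1 by ring, Nat.factorial_succ,
          Nat.factorial_succ],
      show (a+b+2).factorial = (a+b+2) * (a+b+1).factorial by
        rw [show a+b+2 = (a+b+1)+1 by ring, Nat.factorial_succ],
      Nat.factorial_succ a, Nat.factorial_succ b, pow_succ]
    have F1 := fac_ne a
    have F2 := fac_ne b
    have F3 := fac_ne (a+b+1)
    have F4 := fac_ne (2*m+a)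
    have F5 := fac_ne (2*m+2*a+2+b)
    have F6 := fac_ne (4*m+2*a+1)
    have F7 := fac_ne (4*m+4*a+2*b+5)
    push_cast
    have G1 : ((a:ℝ)+1) ≠ 0 := by positivity
    have G2 : ((b:ℝ)+1) ≠ 0 := by positivity
    have G3 : ((a:ℝ)+(b:ℝ)+2) ≠ 0 := by positivity
    have G4 : (2*(m:ℝ)+(a:ℝ)+1) ≠ 0 := by positivity
    have G5 : (2*(m:ℝ)+2*(a:ℝ)+3+(b:ℝ)) ≠ 0 := by positivity
    have G6 : (4*(m:ℝ)+2*(a:ℝ)+2) ≠ 0 := by positivity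
    have G7 : (4*(m:ℝ)+2*(a:ℝ)+3) ≠ 0 := by positivity
    have G8 : (4*(m:ℝ)+4*(a:ℝ)+2*(b:ℝ)+6) ≠ 0 := by positivity
    have G9 : (4*(m:ℝ)+4*(a:ℝ)+2*(b:ℝ)+7) ≠ 0 := by positivity
    field_simp
    ring


set_option maxHeartbeats 1600000 in
theorem Vmat_even_even_entry (l : ℝ) (hl : 0 < l) (M N : ℕ) (hMN : M < N)
    (m n : ℕ) (hm : m ≤ M / 2) (hn1 : M / 2 + 1 ≤ n) (hn2 : n ≤ N / 2) :
    Vmat M N l ⟨2 * m, by omega⟩ ⟨2 * n, by omega⟩ =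
      ((-1 : ℝ) ^ (M / 2 - m) * l ^ (2 * (n - m)) * ((2 * n).factorial : ℝ))
          / (2 ^ (n - m) * ((n - m).factorial : ℝ) * ((M / 2 - m).factorial : ℝ)
              * ((2 * m).factorial : ℝ))
        * (∏ r ∈ Finset.Icc (n - M / 2) (n - m - 1), (r : ℝ))
        * (∏ r ∈ Finset.Icc (M / 2 + m + 1) (M / 2 + n), (1 : ℝ) / (2 * r + 1)) := by
  have hl' : l ≠ 0 := ne_of_gt hl
  obtain ⟨p, hpdef⟩ : ∃ p, M / 2 = p := ⟨M/2, rfl⟩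
  simp only [hpdef]
  have hm : m ≤ p := by omega
  have hn1 : p + 1 ≤ n := by omega
  have hmp : m ≤ p := hm
  have hpn : p < n := by omega
  rw [Vmat_apply M N l hl']
  simp only [Fin.val_mk]
  set f : ℕ → ℝ := fun k => (2*(k:ℝ)+1) * ((l⁻¹)^(2*m) * l^(2*n))
      * ((legendre k).coeff (2*m) * (Iint (X^(2*n) * legendre k) / 2)) with hf
  set Lc : ℝ := l^(2*(n-m)) * (((2*n).factorial:ℝ) / (((2*m).factorial:ℝ))) with hLc
  have h1 : ∑ k ∈ Finset.range (M+1), f k = ∑ j ∈ Finset.Icc m p, f (2*j) := by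
    have himage : ∑ x ∈ (Finset.Icc m p).image (fun j => 2*j), f x
        = ∑ j ∈ Finset.Icc m p, f (2*j) :=
      Finset.sum_image (by intro x _ y _ h; simp only at h; omega)
    rw [← himage]
    refine (Finset.sum_subset ?_ ?_).symm
    · intro x hx
      simp only [Finset.mem_image, Finset.mem_Icc] at hx
      obtain ⟨j, ⟨_, hj2⟩, hx⟩ := hx
      simp only [Finset.mem_range]
      omega
    · intro k hk hni
      simp only [Finset.mem_range] at hk
      have hc : (legendre k).coeff (2*m) = 0 := by
        rcases Nat.even_or_odd k with he | ho
        · obtain ⟨j, hj⟩ := he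
          have hjm : j < m := by
            by_contra h'
            apply hni
            simp only [Finset.mem_image, Finset.mem_Icc]
            exact ⟨j, ⟨by omega, by omega⟩, by omega⟩
          exact legendre_coeff_zero_of_gt k (2*m) (by omega)
        · obtain ⟨t, ht⟩ := ho
          exact legendre_coeff_zero_of_parity k (2*m) (by omega)
      rw [hf]
      simp only [hc, zero_mul, mul_zero]
  have h2 : ∀ j ∈ Finset.Icc m p, f (2*j)
      = Lc * ((4*(j:ℝ)+1) * ((-1:ℝ)^(j-m) * (((2*j+2*m).factorial:ℕ):ℝ)
              * (((n+j).factorial:ℕ):ℝ))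
          / ((((j+m).factorial:ℕ):ℝ) * (((j-m).factorial:ℕ):ℝ) * (((n-j).factorial:ℕ):ℝ)
              * (((2*n+2*j+1).factorial:ℕ):ℝ))) := by
    intro j hj
    simp only [Finset.mem_Icc] at hj
    obtain ⟨hmj, hjp⟩ := hj
    have hjn : j < n := by omega
    have hmom := Iint_moment (2*j) (n-j)
    rw [show 2*j+(n-j) = n+j by omega, show 2*(2*j)+2*(n-j)+1 = 2*n+2*j+1 by omega,
      show 2*j+2*(n-j) = 2*n by omega] at hmom
    have hlp : (l⁻¹)^(2*m) * l^(2*n) = l^(2*(n-m)) := by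
      have hz : l^(2*m) ≠ 0 := pow_ne_zero _ hl'
      rw [show (2:ℕ)*n = 2*(n-m)+2*m by omega, pow_add, inv_pow, mul_comm, mul_assoc,
        mul_inv_cancel₀ hz, mul_one]
    have hdesc : (((2*m+2*j).descFactorial (2*j) : ℕ) : ℝ)
        = (((2*j+2*m).factorial:ℕ):ℝ) / (((2*m).factorial:ℕ):ℝ) := by
      rw [eq_div_iff (fac_ne _)]
      have h := Nat.factorial_mul_descFactorial (n := 2*m+2*j) (k := 2*j) (by omega)
      rw [show 2*m+2*j-(2*j) = 2*m by omega] at h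
      rw [show 2*j+2*m = 2*m+2*j by omega, mul_comm]
      exact_mod_cast h
    have hchoose : (((2*j).choose (j+m) : ℕ) : ℝ)
        = (((2*j).factorial:ℕ):ℝ) / ((((j+m).factorial:ℕ):ℝ) * (((j-m).factorial:ℕ):ℝ)) := by
      rw [eq_div_iff (mul_ne_zero (fac_ne _) (fac_ne _))]
      have h := Nat.choose_mul_factorial_mul_factorial (n := 2*j) (k := j+m) (by omega)
      rw [show 2*j-(j+m) = j-m by omega] at h
      rw [← mul_assoc]
      exact_mod_cast h
    rw [hf]
    simp only []
    rw [legendre_coeff_even j m hmj, hmom, hlp, hdesc, hchoose, hLc]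
    have hfj : (2*((2*j:ℕ):ℝ)+1) = 4*(j:ℝ)+1 := by push_cast; ring
    push_cast
    have hpow : (2:ℝ)^(2*j+1) = 2^(2*j) * 2 := pow_succ 2 (2*j)
    rw [hpow]
    have h2j : ((2:ℝ)^(2*j)) ≠ 0 := by positivity
    field_simp
    ring
  rw [h1, Finset.sum_congr rfl h2, ← Finset.mul_sum]
  rw [key_sum m n p hmp hpn]
  -- final algebra
  have hP1 : (∏ r ∈ Finset.Icc (n-p) (n-m-1), (r:ℝ))
      = (((n-m-1).factorial:ℕ):ℝ) / (((n-p-1).factorial:ℕ):ℝ) := by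
    have h := fac_prod_Icc (n-p-1) (n-m-1) (by omega)
    rw [show n-p-1+1 = n-p by omega] at h
    rw [eq_div_iff (fac_ne _)]
    have h2 := congrArg (Nat.cast : ℕ → ℝ) h
    push_cast at h2
    rw [mul_comm]
    exact h2
  have hP2 : (∏ r ∈ Finset.Icc (p+m+1) (p+n), (1:ℝ)/(2*(r:ℝ)+1))
      = ((((2*(p+m)+1).factorial:ℕ):ℝ) * 2^(p+n) * (((p+n).factorial:ℕ):ℝ))
        / ((((2*(p+n)+1).factorial:ℕ):ℝ) * 2^(p+m) * (((p+m).factorial:ℕ):ℝ)) := by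
    have h := odd_prod_Icc (p+m) (p+n) (by omega)
    have hcast : (∏ r ∈ Finset.Icc (p+m+1) (p+n), (2*(r:ℝ)+1))
        = ((∏ r ∈ Finset.Icc (p+m+1) (p+n), (2*r+1) : ℕ) : ℝ) := by
      push_cast
      rfl
    have hPpos : 0 < (∏ r ∈ Finset.Icc (p+m+1) (p+n), (2*r+1) : ℕ) :=
      Finset.prod_pos (fun r _ => by omega)
    have hPne : ((∏ r ∈ Finset.Icc (p+m+1) (p+n), (2*r+1) : ℕ) : ℝ) ≠ 0 := by
      exact_mod_cast hPpos.ne'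
    have hDne : ((((2*(p+n)+1).factorial:ℕ):ℝ) * 2^(p+m) * (((p+m).factorial:ℕ):ℝ)) ≠ 0 := by
      have := fac_ne ((2*(p+n)+1))
      have := fac_ne (p+m)
      positivity
    simp only [one_div]
    rw [Finset.prod_inv_distrib, hcast, eq_div_iff hDne, inv_mul_eq_div, div_eq_iff hPne]
    have h2 := congrArg (Nat.cast : ℕ → ℝ) h
    push_cast at h2
    push_cast
    linear_combination - h2
  rw [hP1, hP2]
  rw [show 2*(p+m)+1 = 2*p+2*m+1 by ring, show 2*(p+n)+1 = 2*p+2*n+1 by ring]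
  have hpow : (2:ℝ)^(p+n) = 2^(n-m) * 2^(p+m) := by
    rw [← pow_add]
    congr 1
    omega
  rw [hpow]
  field_simp
  ring_nf
  rw [hLc, show (n-m)*2 = 2*(n-m) by ring, show m*2 = 2*m by ring, show n*2 = 2*n by ring,
    mul_assoc, div_mul_cancel₀ _ (fac_ne (2*m))]
end
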